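/- Let φ and ψ be MR-formulas in the variables p_1,…,p_n. If there exist a Kripke model M and a point w with M, w ⊨ φ and M, w ⊭ ψ, then there exists a node T_u of the n-universal model T(n) such that T(n), T_u ⊨ φ and T(n), T_u ⊭ ψ. -/

import Mathlib

/-! ## Formulas of intuitionistic propositional logic -/

inductive Formula : Type
  | bot : Formula
  | var : ℕ → Formula
  | and : Formula → Formula → Formula
  | or  : Formula → Formula → Formula
  | imp : Formula → Formula → Formula
  deriving DecidableEq

namespace Formula

def top : Formula := imp bot bot

def iff_ (φ ψ : Formula) : Formula := and (imp φ ψ) (imp ψ φ)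

/-- `φ` contains no implication at all. -/
def noImp : Formula → Prop
  | bot => True
  | var _ => True
  | and φ ψ => noImp φ ∧ noImp ψ
  | or φ ψ => noImp φ ∧ noImp ψ
  | imp _ _ => False

/-- NNIL-formulas: no nesting of implications to the left. -/
def IsNNIL : Formula → Prop
  | bot => True
  | var _ => True
  | and φ ψ => IsNNIL φ ∧ IsNNIL ψ
  | or φ ψ => IsNNIL φ ∧ IsNNIL ψ
  | imp φ ψ => noImp φ ∧ IsNNIL ψ

/-- `φ` is an `n`-formula: all its propositional variables are among `p_0, …, p_{n-1}`. -/
def varsBelow (n : ℕ) : Formula → Prop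
  | bot => True
  | var p => p < n
  | and φ ψ => varsBelow n φ ∧ varsBelow n ψ
  | or φ ψ => varsBelow n φ ∧ varsBelow n ψ
  | imp φ ψ => varsBelow n φ ∧ varsBelow n ψ

/-- the propositional variable `p` occurs in the formula -/
def occurs (p : ℕ) : Formula → Prop
  | bot => False
  | var q => q = p
  | and φ ψ => occurs p φ ∨ occurs p ψ
  | or φ ψ => occurs p φ ∨ occurs p ψ
  | imp φ ψ => occurs p φ ∨ occurs p ψ

/-- uniform substitution -/
def subst (σ : ℕ → Formula) : Formula → Formula
  | bot => bot
  | var p => σ p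
  | and φ ψ => and (subst σ φ) (subst σ ψ)
  | or φ ψ => or (subst σ φ) (subst σ ψ)
  | imp φ ψ => imp (subst σ φ) (subst σ ψ)

end Formula

/-- finite conjunction (empty conjunction is ⊤) -/
def listAnd : List Formula → Formula
  | [] => Formula.top
  | φ :: l => Formula.and φ (listAnd l)

/-- finite disjunction (empty disjunction is ⊥) -/
def listOr : List Formula → Formula
  | [] => Formula.bot
  | φ :: l => Formula.or φ (listOr l)

/-! ## Kripke structures, models and satisfaction -/

/-- raw Kripke structure: worlds, relation, Boolean valuation -/
structure KStruct where
  W : Type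
  R : W → W → Prop
  V : W → ℕ → Bool

namespace KStruct

/-- a Kripke model: `R` is a partial order and `V` is persistent -/
def IsModel (M : KStruct) : Prop :=
  (∀ w, M.R w w) ∧
  (∀ w u v, M.R w u → M.R u v → M.R w v) ∧
  (∀ w u, M.R w u → M.R u w → w = u) ∧
  (∀ w u p, M.R w u → M.V w p = true → M.V u p = true)

/-- an `n`-model: a Kripke model whose valuation is restricted to the variables `p_0,…,p_{n-1}` -/
def IsNModel (M : KStruct) (n : ℕ) : Prop :=
  M.IsModel ∧ ∀ w p, n ≤ p → M.V w p = false

/-- intuitionistic satisfaction -/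
def sat (M : KStruct) : M.W → Formula → Prop
  | _, Formula.bot => False
  | w, Formula.var p => M.V w p = true
  | w, Formula.and φ ψ => M.sat w φ ∧ M.sat w ψ
  | w, Formula.or φ ψ => M.sat w φ ∨ M.sat w ψ
  | w, Formula.imp φ ψ => ∀ u, M.R w u → M.sat u φ → M.sat u ψ

/-- the submodel on a subset of the worlds -/
def restrict (M : KStruct) (S : Set M.W) : KStruct where
  W := S
  R := fun a b => M.R a.1 b.1
  V := fun a p => M.V a.1 p

end KStruct

/-- monotonic map between Kripke structures: preserves the order and the colors -/
def Monotonic (M N : KStruct) (f : M.W → N.W) : Prop :=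
  (∀ w u, M.R w u → N.R (f w) (f u)) ∧ (∀ w p, N.V (f w) p = M.V w p)

/-- p-morphism: a monotonic map satisfying the forth condition -/
def PMorphism (M N : KStruct) (f : M.W → N.W) : Prop :=
  Monotonic M N f ∧ ∀ w u', N.R (f w) u' → ∃ u, M.R w u ∧ f u = u'

/-- MR: the class of formulas reflected by monotonic maps between Kripke models -/
def MR (φ : Formula) : Prop :=
  ∀ (N M : KStruct), N.IsModel → M.IsModel →
    ∀ f : N.W → M.W, Monotonic N M f → ∀ w : N.W, M.sat (f w) φ → N.sat w φ

/-- `r` is a root of `M` -/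
def IsRoot (M : KStruct) (r : M.W) : Prop := ∀ w, M.R r w

/-- `M` is tree-like with root `r`: rooted, and each point has a finite,
linearly ordered set of predecessors -/
def IsTree (M : KStruct) (r : M.W) : Prop :=
  IsRoot M r ∧ (∀ w : M.W, {u | M.R u w}.Finite) ∧
  (∀ w u v : M.W, M.R u w → M.R v w → (M.R u v ∨ M.R v u))

/-- `u` is an immediate (proper) successor of `w` -/
def ImmSucc (M : KStruct) (w u : M.W) : Prop :=
  M.R w u ∧ w ≠ u ∧ ∀ v, M.R w v → M.R v u → v = w ∨ v = u

/-- `S` carries a color-preserving submodel of `M` -/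
def ColorPresSub (M : KStruct) (S : Set M.W) : Prop :=
  ∀ w ∈ S, ∀ u, M.R w u → ∃ v ∈ S, M.R w v ∧ ∀ p, M.V v p = M.V u p

/-! ## The β-formulas of finite models -/

/-- the variables among `p_0,…,p_{n-1}` true at `w` -/
def propList (M : KStruct) (n : ℕ) (w : M.W) : List Formula :=
  ((List.range n).filter (fun p => M.V w p)).map Formula.var

/-- the variables among `p_0,…,p_{n-1}` false at `w` -/
def notpropList (M : KStruct) (n : ℕ) (w : M.W) : List Formula :=
  ((List.range n).filter (fun p => !(M.V w p))).map Formula.var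

open Classical in
/-- the immediate successors of `w`, as a list -/
noncomputable def immSuccList (M : KStruct) [Fintype M.W] (w : M.W) : List M.W :=
  (Finset.univ.filter (fun u => ImmSucc M w u)).toList

/-- β(w), defined by recursion on the depth of `w` (computed with enough fuel):
`β(w) = ⋀prop(w) → (⋁notprop(w) ∨ β(w_1) ∨ … ∨ β(w_k))` where the `w_i` are the
immediate successors of `w` (for maximal `w` the last disjunct is the empty disjunction). -/
noncomputable def betaFuel (M : KStruct) [Fintype M.W] (n : ℕ) : ℕ → M.W → Formula
  | 0, _ => Formula.bot
  | (k+1), w =>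
      Formula.imp (listAnd (propList M n w))
        (listOr (notpropList M n w ++ (immSuccList M w).map (fun u => betaFuel M n k u)))

/-- β(w) for a point `w` of a finite `n`-model: `Fintype.card M.W` is an upper bound
for the depth of any point, so the recursion above never runs out of fuel. -/
noncomputable def beta (M : KStruct) [inst : Fintype M.W] (n : ℕ) (w : M.W) : Formula :=
  betaFuel M n (Fintype.card M.W) w

/-! ## Unravelings -/

/-- the unraveling `T_N` of a rooted model `(N, r)`: points are the finite sequences
`⟨r, w_1, …, w_k⟩` in which each entry is an immediate successor of the preceding one,
ordered by the initial-segment relation; such a sequence satisfies the same variables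
as its last entry. -/
def Unravel (M : KStruct) (r : M.W) : KStruct where
  W := {l : List M.W // l.head? = some r ∧ List.Chain' (ImmSucc M) l}
  R := fun σ τ => σ.1 <+: τ.1
  V := fun σ p => (σ.1.getLast?.map (fun w => M.V w p)).getD false

/-! ## Kripke frames -/

structure KFrame where
  W : Type
  R : W → W → Prop

namespace KFrame

/-- a Kripke frame: `R` is a partial order -/
def IsFrame (F : KFrame) : Prop :=
  (∀ w, F.R w w) ∧ (∀ w u v, F.R w u → F.R u v → F.R w v) ∧
  (∀ w u, F.R w u → F.R u w → w = u)

def Persistent (F : KFrame) (V : F.W → ℕ → Bool) : Prop :=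
  ∀ w u p, F.R w u → V w p = true → V u p = true

/-- the model on `F` given by a valuation -/
def model (F : KFrame) (V : F.W → ℕ → Bool) : KStruct := ⟨F.W, F.R, V⟩

/-- `F ⊨ φ` : `φ` is true at every point of every model on `F` -/
def valid (F : KFrame) (φ : Formula) : Prop :=
  ∀ V, F.Persistent V → ∀ w, (F.model V).sat w φ

/-- the substructure of `F` on a subset `S` of its domain, with the restricted order -/
def restrictF (F : KFrame) (S : Set F.W) : KFrame :=
  ⟨S, fun a b => F.R a.1 b.1⟩

end KFrame

/-- a monotonic map from a model `N` into a frame `F` which is color-consistent: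
`f(w) R f(u)` implies `col(w) ≤ col(u)` -/
def ColorConsistentMap (N : KStruct) (F : KFrame) (f : N.W → F.W) : Prop :=
  (∀ w u, N.R w u → F.R (f w) (f u)) ∧
  (∀ w u, F.R (f w) (f u) → ∀ p, N.V w p = true → N.V u p = true)


/-! ## The n-universal model 𝒯(n) for NNIL -/

/-- an `n`-color -/
abbrev Col (n : ℕ) := Fin n → Bool

/-- componentwise order on colors -/
def ColLE {n : ℕ} (c d : Col n) : Prop := ∀ i, c i = true → d i = true

def ColLT {n : ℕ} (c d : Col n) : Prop := ColLE c d ∧ c ≠ d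

/-- finite colored trees: a root color together with the list of subtrees
hanging above the root -/
inductive CTree (n : ℕ) : Type
  | node : Col n → List (CTree n) → CTree n

namespace CTree

variable {n : ℕ}

def color : CTree n → Col n
  | node c _ => c

def children : CTree n → List (CTree n)
  | node _ ts => ts

/-- the subtree of `t` at a position (a list of child indices) -/
def subt : List ℕ → CTree n → Option (CTree n)
  | [], t => some t
  | i :: l, t => (t.children[i]?).bind (subt l)

/-- the finite tree-like `n`-model determined by a colored tree: its worlds are
the positions of `t`, ordered by the initial-segment relation, and a position
satisfies `p_i` iff the color of the subtree there is `1` at `i`. -/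
def toModel (t : CTree n) : KStruct where
  W := {l : List ℕ // (subt l t).isSome = true}
  R := fun a b => a.1 <+: b.1
  V := fun a p =>
    if h : p < n then ((subt a.1 t).map (fun s => s.color ⟨p, h⟩)).getD false
    else false

/-- the root of the model of a tree -/
def root (t : CTree n) : t.toModel.W := ⟨[], rfl⟩

/-- an injective code of colors -/
def colCode (c : Col n) : ℕ := ∑ i : Fin n, (if c i then 2 ^ (i : ℕ) else 0)

/-- an injective code of lists of numbers -/
def listCode : List ℕ → ℕ
  | [] => 0
  | a :: l => Nat.pair a (listCode l) + 1

/-- an injective code of colored trees, used to order the children of every node of a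
tree in the universal model canonically -/
def code : CTree n → ℕ
  | node c ts => Nat.pair (colCode c) (listCode (ts.attach.map (fun x => code x.1)))
decreasing_by
  have := List.sizeOf_lt_of_mem x.2
  simp only [CTree.node.sizeOf_spec]
  omega

end CTree

/-- `MLE s t` (`s ≤ t`): there is a monotonic map from (the model of) `t` into `s` -/
def MLE {n : ℕ} (s t : CTree n) : Prop :=
  ∃ f : t.toModel.W → s.toModel.W, Monotonic t.toModel s.toModel f

/-- membership in the domain of the universal model `𝒯(n)`, built in layers:
layer 1 consists of the one-point trees (one for each color); a tree of a later layer
is built from a set `X` of pairwise `≤`-incomparable trees of earlier layers (encoded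
as a list sorted canonically by `code`) by adding a fresh root below whose color is
strictly smaller than every color occurring in the trees of `X`. -/
inductive UMem : {n : ℕ} → CTree n → Prop
  | single {n : ℕ} (c : Col n) : UMem (CTree.node c [])
  | step {n : ℕ} (c : Col n) (ts : List (CTree n)) :
      ts ≠ [] →
      (∀ t ∈ ts, UMem t) →
      List.Chain' (fun a b => CTree.code a < CTree.code b) ts →
      (∀ t ∈ ts, ∀ s ∈ ts, t ≠ s → ¬ MLE t s) →
      (∀ t ∈ ts, ∀ (l : List ℕ) (s : CTree n), CTree.subt l t = some s →
        ColLT c s.color) →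
      UMem (CTree.node c ts)

/-- the universal model `𝒯(n)`: its points are the trees in `UMem`, ordered by `≤`
(where `T_w ≤ T_u` iff there is a monotonic map from `T_u` into `T_w`), and the color
of a node is the color of the root of the corresponding tree. -/
def UnivModel (n : ℕ) : KStruct where
  W := {t : CTree n // UMem t}
  R := fun a b => MLE a.1 b.1
  V := fun a p => if h : p < n then a.1.color ⟨p, h⟩ else false

/-- mutual monotonic mappability (`≡`) of Kripke structures -/
def MEquiv (A B : KStruct) : Prop :=
  (∃ f : B.W → A.W, Monotonic B A f) ∧ (∃ g : A.W → B.W, Monotonic A B g)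

/-! ### Auxiliary development -/

section ColLemmas

variable {n : ℕ}

theorem colLE_refl (c : Col n) : ColLE c c := fun _ h => h

theorem colLE_trans {c d e : Col n} (h1 : ColLE c d) (h2 : ColLE d e) : ColLE c e :=
  fun i hi => h2 i (h1 i hi)

theorem colLE_antisymm {c d : Col n} (h1 : ColLE c d) (h2 : ColLE d c) : c = d := by
  funext i
  cases hc : c i <;> cases hd : d i
  · rfl
  · exact (Bool.false_ne_true (hc ▸ h2 i hd)).elim
  · exact (Bool.false_ne_true (hd ▸ h1 i hc)).elim
  · rfl

theorem colLT_colLE_trans {c d e : Col n} (h1 : ColLT c d) (h2 : ColLE d e) : ColLT c e := by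
  refine ⟨colLE_trans h1.1 h2, ?_⟩
  rintro rfl
  exact h1.2 (colLE_antisymm h1.1 h2)

theorem colLT_asymm {c d : Col n} (h1 : ColLT c d) (h2 : ColLT d c) : False :=
  h1.2 (colLE_antisymm h1.1 h2.1)

/-- the weight (number of `true` bits) of a color -/
def colWt (c : Col n) : ℕ := (Finset.univ.filter (fun i => c i = true)).card

theorem colWt_le (c : Col n) : colWt c ≤ n := by
  have := Finset.card_filter_le (Finset.univ : Finset (Fin n)) (fun i => c i = true)
  unfold colWt; simpa using this

theorem colLT_wt {c d : Col n} (h : ColLT c d) : colWt c < colWt d := by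
  apply Finset.card_lt_card
  constructor
  · intro i hi
    simp only [Finset.mem_filter, Finset.mem_univ, true_and] at hi ⊢
    exact h.1 i hi
  · intro hsub
    apply h.2
    funext i
    cases hc : c i <;> cases hd : d i
    · rfl
    · have : i ∈ Finset.univ.filter (fun j => c j = true) := hsub (by simp [hd])
      simp only [Finset.mem_filter, Finset.mem_univ, true_and] at this
      rw [this] at hc; exact hc.symm ▸ rfl
    · exact absurd (h.1 i hc) (by simp [hd])
    · rfl

end ColLemmas

section CodeInj

variable {n : ℕ}

theorem colCode_lt : ∀ (n : ℕ) (c : Col n), CTree.colCode c < 2 ^ n := by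
  intro n
  induction n with
  | zero => intro c; simp [CTree.colCode]
  | succ m ih =>
    intro c
    have : CTree.colCode c =
        CTree.colCode (fun i : Fin m => c i.castSucc) + (if c (Fin.last m) then 2 ^ m else 0) := by
      rw [CTree.colCode, Fin.sum_univ_castSucc]
      simp [CTree.colCode]
    rw [this]
    have h1 := ih (fun i : Fin m => c i.castSucc)
    have h2 : (if c (Fin.last m) then 2 ^ m else 0) ≤ 2 ^ m := by split <;> simp
    have h3 : 2 ^ (m+1) = 2 ^ m + 2 ^ m := by rw [pow_succ]; omega
    omega

theorem colCode_inj : ∀ (n : ℕ) (c d : Col n), CTree.colCode c = CTree.colCode d → c = d := by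
  intro n
  induction n with
  | zero => intro c d _; funext i; exact absurd i.2 (by omega)
  | succ m ih =>
    intro c d h
    have ec : CTree.colCode c =
        CTree.colCode (fun i : Fin m => c i.castSucc) + (if c (Fin.last m) then 2 ^ m else 0) := by
      rw [CTree.colCode, Fin.sum_univ_castSucc]; simp [CTree.colCode]
    have ed : CTree.colCode d =
        CTree.colCode (fun i : Fin m => d i.castSucc) + (if d (Fin.last m) then 2 ^ m else 0) := by
      rw [CTree.colCode, Fin.sum_univ_castSucc]; simp [CTree.colCode]
    have hc := colCode_lt m (fun i : Fin m => c i.castSucc)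
    have hd := colCode_lt m (fun i : Fin m => d i.castSucc)
    rw [ec, ed] at h
    have hlast : c (Fin.last m) = d (Fin.last m) := by
      cases hcl : c (Fin.last m) <;> cases hdl : d (Fin.last m) <;>
        simp only [hcl, hdl, if_true, if_false, Bool.false_eq_true, Bool.true_eq_false] at h <;>
        first | rfl | omega
    have hlow : (fun i : Fin m => c i.castSucc) = (fun i : Fin m => d i.castSucc) := by
      apply ih
      rw [hlast] at h
      omega
    funext i
    refine Fin.lastCases ?_ ?_ i
    · exact hlast
    · intro j; exact congrFun hlow j

theorem listCode_inj : ∀ (l₁ l₂ : List ℕ), CTree.listCode l₁ = CTree.listCode l₂ → l₁ = l₂ := by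
  intro l₁
  induction l₁ with
  | nil => intro l₂ h; cases l₂ with
    | nil => rfl
    | cons a l => simp [CTree.listCode] at h
  | cons a l ih =>
    intro l₂ h
    cases l₂ with
    | nil => simp [CTree.listCode] at h
    | cons b l' =>
      simp only [CTree.listCode, Nat.add_right_cancel_iff] at h
      have := Nat.pair_eq_pair.mp h
      rw [this.1, ih l' this.2]

theorem code_node {c : Col n} {ts : List (CTree n)} :
    CTree.code (CTree.node c ts) = Nat.pair (CTree.colCode c) (CTree.listCode (ts.map CTree.code)) := by
  rw [CTree.code, List.attach_map_val]

theorem code_inj : ∀ (a b : CTree n), CTree.code a = CTree.code b → a = b := by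
  have main : ∀ (k : ℕ) (a b : CTree n), sizeOf a ≤ k → CTree.code a = CTree.code b → a = b := by
    intro k
    induction k with
    | zero =>
      intro a b hs _
      cases a with | node c ts =>
        exact absurd hs (by simp only [CTree.node.sizeOf_spec]; omega)
    | succ k ih =>
      intro a b hs h
      cases a with | node c ts =>
      cases b with | node d ss =>
      rw [code_node, code_node] at h
      obtain ⟨h1, h2⟩ := Nat.pair_eq_pair.mp h
      cases colCode_inj n c d h1
      have hmap := listCode_inj _ _ h2
      have hts : sizeOf ts ≤ k := by
        simp only [CTree.node.sizeOf_spec] at hs; omega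
      suffices hss : ts = ss by rw [hss]
      clear h h2 hs h1
      induction ts generalizing ss with
      | nil => cases ss with
        | nil => rfl
        | cons b l => simp at hmap
      | cons t l ihl =>
        cases ss with
        | nil => simp at hmap
        | cons s l' =>
          simp only [List.map_cons, List.cons.injEq] at hmap
          have h1 : sizeOf t ≤ k := by
            simp only [List.cons.sizeOf_spec] at hts; omega
          have h2 : sizeOf l ≤ k := by
            simp only [List.cons.sizeOf_spec] at hts; omega
          exact congrArg₂ List.cons (ih t s h1 hmap.1) (ihl l' hmap.2 h2)
  intro a b
  exact main (sizeOf a) a b le_rfl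

end CodeInj

section SubtPcol

variable {n : ℕ}

namespace CTree

theorem subt_nil (t : CTree n) : subt [] t = some t := rfl

theorem subt_cons (i : ℕ) (l : List ℕ) (t : CTree n) :
    subt (i :: l) t = (t.children[i]?).bind (subt l) := rfl

theorem subt_append (l₁ l₂ : List ℕ) (t : CTree n) :
    subt (l₁ ++ l₂) t = (subt l₁ t).bind (subt l₂) := by
  induction l₁ generalizing t with
  | nil => simp [subt]
  | cons i l ih =>
    cases h : t.children[i]? with
    | none => simp [subt_cons, h]
    | some c => simp [subt_cons, h, ih]

/-- the color of the subtree of `t` at position `l` (junk if invalid) -/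
def pcol (t : CTree n) (l : List ℕ) : Col n :=
  ((subt l t).map color).getD (fun _ => false)

theorem pcol_eq {t s : CTree n} {l : List ℕ} (h : subt l t = some s) :
    pcol t l = s.color := by simp [pcol, h]

theorem pcol_nil (t : CTree n) : pcol t [] = t.color := rfl

theorem toModel_V (t : CTree n) (x : t.toModel.W) (p : ℕ) :
    t.toModel.V x p = if h : p < n then pcol t x.1 ⟨p, h⟩ else false := by
  obtain ⟨l, hl⟩ := x
  obtain ⟨s, hs⟩ := Option.isSome_iff_exists.mp hl
  simp only [toModel]
  split
  · simp [hs, pcol]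
  · rfl

end CTree

open CTree

/-- raw version of a monotonic map between the models of two trees -/
def MLERaw (s t : CTree n) : Prop :=
  ∃ g : List ℕ → List ℕ,
    (∀ l, (subt l t).isSome → (subt (g l) s).isSome) ∧
    (∀ l₁ l₂, (subt l₁ t).isSome → (subt l₂ t).isSome → l₁ <+: l₂ → g l₁ <+: g l₂) ∧
    (∀ l, (subt l t).isSome → pcol s (g l) = pcol t l)

theorem mle_iff_raw (s t : CTree n) : MLE s t ↔ MLERaw s t := by
  constructor
  · rintro ⟨f, hR, hV⟩
    refine ⟨fun l => if h : (subt l t).isSome then (f ⟨l, h⟩).1 else [], ?_, ?_, ?_⟩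
    · intro l hl
      simp only [dif_pos hl]
      exact (f ⟨l, hl⟩).2
    · intro l₁ l₂ h₁ h₂ hpre
      simp only [dif_pos h₁, dif_pos h₂]
      exact hR ⟨l₁, h₁⟩ ⟨l₂, h₂⟩ hpre
    · intro l hl
      simp only [dif_pos hl]
      funext i
      have := hV ⟨l, hl⟩ i.1
      erw [toModel_V, toModel_V] at this
      rw [dif_pos i.2, dif_pos i.2] at this
      simpa using this
  · rintro ⟨g, h1, h2, h3⟩
    refine ⟨fun x => ⟨g x.1, h1 x.1 x.2⟩, ?_, ?_⟩
    · intro x y hxy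
      exact h2 x.1 y.1 x.2 y.2 hxy
    · intro x p
      erw [toModel_V, toModel_V]
      by_cases h : p < n
      · rw [dif_pos h, dif_pos h]
        exact congrFun (h3 x.1 x.2) ⟨p, h⟩
      · rw [dif_neg h, dif_neg h]

theorem mle_refl (t : CTree n) : MLE t t :=
  ⟨id, fun _ _ h => h, fun _ _ => rfl⟩

theorem mle_trans {a b c : CTree n} (h1 : MLE a b) (h2 : MLE b c) : MLE a c := by
  obtain ⟨f, hf⟩ := h1
  obtain ⟨g, hg⟩ := h2
  exact ⟨f ∘ g, fun x y h => hf.1 _ _ (hg.1 x y h), fun x p => (hf.2 (g x) p).trans (hg.2 x p)⟩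

theorem mle_subtree {a s : CTree n} {q : List ℕ} (h : subt q a = some s) : MLE a s := by
  rw [mle_iff_raw]
  refine ⟨fun l => q ++ l, ?_, ?_, ?_⟩
  · intro l hl
    rw [subt_append, h]
    exact hl
  · intro l₁ l₂ _ _ hpre
    exact (List.prefix_append_right_inj q).mpr hpre
  · intro l hl
    unfold pcol
    rw [subt_append, h]
    rfl

theorem mle_single {a : CTree n} {c : Col n} (h : a.color = c) :
    MLE a (CTree.node c []) := by
  rw [mle_iff_raw]
  have hval : ∀ l : List ℕ, (subt l (CTree.node c [])).isSome → l = [] := by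
    intro l hl
    cases l with
    | nil => rfl
    | cons i l' => simp [subt_cons, children] at hl
  refine ⟨fun _ => [], ?_, ?_, ?_⟩
  · intro l _; simp [subt]
  · intro l₁ l₂ _ _ _; exact List.prefix_refl []
  · intro l hl
    have hl' := hval l hl
    subst hl'
    simpa [pcol_nil, CTree.color] using h

theorem mle_color_eq {a b : CTree n} (h : MLE a b) :
    ∃ q, subt q a ≠ none ∧ pcol a q = b.color := by
  rw [mle_iff_raw] at h
  obtain ⟨g, h1, h2, h3⟩ := h
  have hnil : (subt ([] : List ℕ) b).isSome := by simp [subt]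
  refine ⟨g [], ?_, ?_⟩
  · have := h1 [] hnil
    exact Option.isSome_iff_ne_none.mp this
  · rw [h3 [] hnil, pcol_nil]

theorem mle_factor {a b : CTree n} (h : MLE a b) {x : List ℕ} {bs : CTree n}
    (hx : subt x b = some bs) :
    ∃ q as, subt q a = some as ∧ as.color = bs.color ∧ MLE as bs := by
  rw [mle_iff_raw] at h
  obtain ⟨g, h1, h2, h3⟩ := h
  have hxs : (subt x b).isSome := by rw [hx]; rfl
  obtain ⟨as, has⟩ := Option.isSome_iff_exists.mp (h1 x hxs)
  refine ⟨g x, as, has, ?_, ?_⟩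
  · have := h3 x hxs
    rw [pcol_eq has, pcol_eq hx] at this
    exact this
  · rw [mle_iff_raw]
    have key : ∀ l, (subt l bs).isSome →
        ∃ r, g (x ++ l) = g x ++ r ∧ (subt r as).isSome ∧ pcol as r = pcol bs l := by
      intro l hl
      have hxl : (subt (x ++ l) b).isSome := by
        rw [subt_append, hx]; exact hl
      have hpre : g x <+: g (x ++ l) := h2 x (x ++ l) hxs hxl (List.prefix_append x l)
      obtain ⟨r, hr⟩ := hpre
      refine ⟨r, hr.symm, ?_, ?_⟩
      · have := h1 (x ++ l) hxl
        rw [← hr, subt_append, has] at this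
        exact this
      · have hc := h3 (x ++ l) hxl
        rw [← hr] at hc
        unfold pcol at hc ⊢
        rw [subt_append, has] at hc
        rw [subt_append, hx] at hc
        exact hc
    refine ⟨fun l => (g (x ++ l)).drop (g x).length, ?_, ?_, ?_⟩
    · intro l hl
      obtain ⟨r, hr, hrs, _⟩ := key l hl
      simp only [hr, List.drop_left]
      exact hrs
    · intro l₁ l₂ hl₁ hl₂ hpre
      obtain ⟨r₁, hr₁, _, _⟩ := key l₁ hl₁
      obtain ⟨r₂, hr₂, _, _⟩ := key l₂ hl₂
      simp only [hr₁, hr₂, List.drop_left]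
      have : g (x ++ l₁) <+: g (x ++ l₂) := by
        apply h2
        · rw [subt_append, hx]; exact hl₁
        · rw [subt_append, hx]; exact hl₂
        · exact (List.prefix_append_right_inj x).mpr hpre
      rw [hr₁, hr₂] at this
      exact (List.prefix_append_right_inj (g x)).mp this
    · intro l hl
      obtain ⟨r, hr, _, hc⟩ := key l hl
      simp only [hr, List.drop_left]
      exact hc

end SubtPcol

section UMemLemmas

variable {n : ℕ}

open CTree

theorem CTree.pcol_cons {c : Col n} {ts : List (CTree n)} {i : ℕ} {l : List ℕ} {t' : CTree n}
    (h : ts[i]? = some t') : pcol (CTree.node c ts) (i :: l) = pcol t' l := by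
  unfold pcol
  rw [subt_cons]
  show ((ts[i]?.bind (subt l)).map color).getD _ = _
  rw [h, Option.bind_some]

theorem CTree.subt_cons_node {c : Col n} {ts : List (CTree n)} {i : ℕ} {l : List ℕ} :
    subt (i :: l) (CTree.node c ts) = ts[i]?.bind (subt l) := rfl

theorem mem_of_getElem?' {α : Type _} {l : List α} {i : ℕ} {a : α} (h : l[i]? = some a) : a ∈ l := by
  obtain ⟨hi, he⟩ := List.getElem?_eq_some_iff.mp h
  exact he ▸ List.getElem_mem hi

theorem sizeOf_child_lt {t s : CTree n} (h : s ∈ t.children) : sizeOf s < sizeOf t := by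
  cases t with
  | node c ts =>
    simp only [CTree.children] at h
    have := List.sizeOf_lt_of_mem h
    simp only [CTree.node.sizeOf_spec]
    omega

theorem UMem.children_umem {t : CTree n} (h : UMem t) : ∀ s ∈ t.children, UMem s := by
  cases h with
  | single c => intro s hs; simp [CTree.children] at hs
  | step c ts h1 h2 h3 h4 h5 => exact h2

theorem UMem.children_chain {t : CTree n} (h : UMem t) :
    t.children.Chain' (fun a b => CTree.code a < CTree.code b) := by
  cases h with
  | single c => exact List.isChain_nil
  | step c ts h1 h2 h3 h4 h5 => exact h3

theorem UMem.children_incomp {t : CTree n} (h : UMem t) :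
    ∀ a ∈ t.children, ∀ b ∈ t.children, a ≠ b → ¬ MLE a b := by
  cases h with
  | single c => intro a ha; simp [CTree.children] at ha
  | step c ts h1 h2 h3 h4 h5 => exact h4

theorem UMem.colLT_child {t : CTree n} (h : UMem t) :
    ∀ s ∈ t.children, ∀ (l : List ℕ) (s' : CTree n), subt l s = some s' →
      ColLT t.color s'.color := by
  cases h with
  | single c => intro s hs; simp [CTree.children] at hs
  | step c ts h1 h2 h3 h4 h5 => exact h5

theorem umem_pcol_lt {t : CTree n} (h : UMem t) {l : List ℕ}
    (hl : (subt l t).isSome = true) (hne : l ≠ []) : ColLT t.color (pcol t l) := by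
  cases l with
  | nil => exact absurd rfl hne
  | cons i l' =>
    rw [subt_cons] at hl
    cases hi : t.children[i]? with
    | none => rw [hi] at hl; simp at hl
    | some ti =>
      rw [hi, Option.bind_some] at hl
      obtain ⟨s', hs'⟩ := Option.isSome_iff_exists.mp hl
      have : pcol t (i :: l') = s'.color := by
        unfold pcol
        rw [subt_cons, hi, Option.bind_some, hs']
        rfl
      rw [this]
      exact h.colLT_child ti (mem_of_getElem?' hi) l' s' hs'

theorem umem_pcol_le {t : CTree n} (h : UMem t) {l : List ℕ}
    (hl : (subt l t).isSome = true) : ColLE t.color (pcol t l) := by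
  cases l with
  | nil => rw [pcol_nil]; exact colLE_refl _
  | cons i l' => exact (umem_pcol_lt h hl (by simp)).1

theorem umem_subt {t s : CTree n} (ht : UMem t) : ∀ {l : List ℕ}, subt l t = some s → UMem s := by
  suffices H : ∀ (l : List ℕ) (t : CTree n), UMem t → subt l t = some s → UMem s by
    intro l h; exact H l t ht h
  intro l
  induction l with
  | nil => intro t ht h; rw [subt_nil] at h; injection h with h; exact h ▸ ht
  | cons i l' ih =>
    intro t ht h
    rw [subt_cons] at h
    cases hi : t.children[i]? with
    | none => rw [hi] at h; simp at h
    | some ti =>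
      rw [hi, Option.bind_some] at h
      exact ih ti (ht.children_umem ti (mem_of_getElem?' hi)) h

theorem mle_color_le {a b : CTree n} (ha : UMem a) (h : MLE a b) :
    ColLE a.color b.color := by
  obtain ⟨q, hq, hc⟩ := mle_color_eq h
  have hqs : (subt q a).isSome = true := Option.isSome_iff_ne_none.mpr hq
  rw [← hc]
  exact umem_pcol_le ha hqs

theorem mle_node_node {c : Col n} {as bs : List (CTree n)}
    (h : ∀ t' ∈ bs, ∃ t ∈ as, MLE t t') : MLE (CTree.node c as) (CTree.node c bs) := by
  rw [mle_iff_raw]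
  have H : ∀ t' ∈ bs, ∃ g : List ℕ → List ℕ,
      (∀ l, (subt l t').isSome → (subt (g l) (CTree.node c as)).isSome) ∧
      (∀ l₁ l₂, (subt l₁ t').isSome → (subt l₂ t').isSome → l₁ <+: l₂ → g l₁ <+: g l₂) ∧
      (∀ l, (subt l t').isSome → pcol (CTree.node c as) (g l) = pcol t' l) := by
    intro t' ht'
    obtain ⟨t, ht, hle⟩ := h t' ht'
    obtain ⟨j, hj, hgj⟩ := List.getElem_of_mem ht
    have hjq : as[j]? = some t := by rw [List.getElem?_eq_getElem hj, hgj]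
    rw [mle_iff_raw] at hle
    obtain ⟨g₀, hg1, hg2, hg3⟩ := hle
    refine ⟨fun l => j :: g₀ l, ?_, ?_, ?_⟩
    · intro l hl
      rw [subt_cons_node, hjq, Option.bind_some]
      exact hg1 l hl
    · intro l₁ l₂ h₁ h₂ hpre
      exact List.cons_prefix_cons.mpr ⟨rfl, hg2 l₁ l₂ h₁ h₂ hpre⟩
    · intro l hl
      rw [pcol_cons hjq]
      exact hg3 l hl
  choose G hG1 hG2 hG3 using H
  classical
  refine ⟨fun l => match l with
    | [] => []
    | i :: l' => if h' : ∃ t', bs[i]? = some t' then G h'.choose (mem_of_getElem?' h'.choose_spec) l' else [],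
    ?_, ?_, ?_⟩
  · intro l hl
    match l with
    | [] => simp [subt]
    | i :: l' =>
      rw [subt_cons_node] at hl
      cases hi : bs[i]? with
      | none => rw [hi] at hl; simp at hl
      | some ti =>
        rw [hi, Option.bind_some] at hl
        have h' : ∃ t', bs[i]? = some t' := ⟨ti, hi⟩
        simp only [dif_pos h']
        have hch : h'.choose = ti := Option.some.inj (h'.choose_spec.symm.trans hi)
        subst hch
        exact hG1 _ _ l' hl
  · intro l₁ l₂ h₁ h₂ hpre
    match l₁, l₂ with
    | [], _ => exact List.nil_prefix
    | i :: l₁', [] => exact absurd hpre (by simp)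
    | i :: l₁', i₂ :: l₂' =>
      obtain ⟨rfl, hpre'⟩ := List.cons_prefix_cons.mp hpre
      rw [subt_cons_node] at h₁ h₂
      cases hi : bs[i]? with
      | none => rw [hi] at h₁; simp at h₁
      | some ti =>
        rw [hi, Option.bind_some] at h₁ h₂
        have h' : ∃ t', bs[i]? = some t' := ⟨ti, hi⟩
        simp only [dif_pos h']
        have hch : h'.choose = ti := Option.some.inj (h'.choose_spec.symm.trans hi)
        subst hch
        exact hG2 _ _ l₁' l₂' h₁ h₂ hpre'
  · intro l hl
    match l with
    | [] => rfl
    | i :: l' =>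
      rw [subt_cons_node] at hl
      cases hi : bs[i]? with
      | none => rw [hi] at hl; simp at hl
      | some ti =>
        rw [hi, Option.bind_some] at hl
        have h' : ∃ t', bs[i]? = some t' := ⟨ti, hi⟩
        simp only [dif_pos h']
        have hch : h'.choose = ti := Option.some.inj (h'.choose_spec.symm.trans hi)
        subst hch
        rw [pcol_cons hi]
        exact hG3 _ _ l' hl

theorem exists_child_le {a b : CTree n} (hb : UMem b) (hcol : a.color = b.color) (h : MLE a b) :
    ∀ t' ∈ b.children, ∃ t ∈ a.children, MLE t t' := by
  intro t' ht'
  obtain ⟨i, hi, hgi⟩ := List.getElem_of_mem ht'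
  have hx : subt [i] b = some t' := by
    rw [subt_cons, List.getElem?_eq_getElem hi, hgi, Option.bind_some, subt_nil]
  obtain ⟨q, as', hq, hcq, hmle⟩ := mle_factor h hx
  have hqne : q ≠ [] := by
    rintro rfl
    rw [subt_nil] at hq
    injection hq with hq'
    have hlt : ColLT b.color t'.color := hb.colLT_child t' ht' [] t' (subt_nil t')
    apply hlt.2
    rw [← hcq, ← hq', hcol]
  cases q with
  | nil => exact absurd rfl hqne
  | cons j r =>
    rw [subt_cons] at hq
    cases hj : a.children[j]? with
    | none => rw [hj] at hq; simp at hq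
    | some cj =>
      rw [hj, Option.bind_some] at hq
      exact ⟨cj, mem_of_getElem?' hj, mle_trans (mle_subtree hq) hmle⟩

instance : IsTrans (CTree n) (fun a b => CTree.code a < CTree.code b) :=
  ⟨fun _ _ _ h1 h2 => lt_trans h1 h2⟩

theorem chain'_code_eq : ∀ {l₁ l₂ : List (CTree n)},
    l₁.Chain' (fun a b => CTree.code a < CTree.code b) →
    l₂.Chain' (fun a b => CTree.code a < CTree.code b) →
    (∀ x, x ∈ l₁ ↔ x ∈ l₂) → l₁ = l₂ := by
  intro l₁
  induction l₁ with
  | nil =>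
    intro l₂ _ _ h
    cases l₂ with
    | nil => rfl
    | cons b l => exact absurd ((h b).mpr List.mem_cons_self) List.not_mem_nil
  | cons a l ih =>
    intro l₂ h₁ h₂ hmem
    cases l₂ with
    | nil => exact absurd ((hmem a).mp List.mem_cons_self) List.not_mem_nil
    | cons b l' =>
      have hp₁ := List.isChain_iff_pairwise.mp h₁
      have hp₂ := List.isChain_iff_pairwise.mp h₂
      have hab : a = b := by
        rcases List.mem_cons.mp ((hmem a).mp List.mem_cons_self) with h | h
        · exact h
        · rcases List.mem_cons.mp ((hmem b).mpr List.mem_cons_self) with h' | h'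
          · exact h'.symm
          · have c1 : CTree.code b < CTree.code a := List.rel_of_pairwise_cons hp₂ h
            have c2 : CTree.code a < CTree.code b := List.rel_of_pairwise_cons hp₁ h'
            omega
      subst hab
      congr 1
      apply ih (List.IsChain.tail h₁) (List.IsChain.tail h₂)
      intro x
      constructor
      · intro hx
        rcases List.mem_cons.mp ((hmem x).mp (List.mem_cons_of_mem a hx)) with rfl | h
        · exact absurd (List.rel_of_pairwise_cons hp₁ hx) (lt_irrefl _)
        · exact h
      · intro hx
        rcases List.mem_cons.mp ((hmem x).mpr (List.mem_cons_of_mem a hx)) with rfl | h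
        · exact absurd (List.rel_of_pairwise_cons hp₂ hx) (lt_irrefl _)
        · exact h

theorem mle_antisymm (a b : CTree n) (ha : UMem a) (hb : UMem b)
    (hab : MLE a b) (hba : MLE b a) : a = b := by
  have hcol : a.color = b.color := by
    obtain ⟨q1, hq1, hc1⟩ := mle_color_eq hab
    obtain ⟨q2, hq2, hc2⟩ := mle_color_eq hba
    rcases eq_or_ne q1 [] with rfl | hne1
    · rw [pcol_nil] at hc1; exact hc1
    · have h1 : ColLT a.color b.color :=
        hc1 ▸ umem_pcol_lt ha (Option.isSome_iff_ne_none.mpr hq1) hne1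
      rcases eq_or_ne q2 [] with rfl | hne2
      · rw [pcol_nil] at hc2; exact hc2.symm
      · have h2 : ColLT b.color a.color :=
          hc2 ▸ umem_pcol_lt hb (Option.isSome_iff_ne_none.mpr hq2) hne2
        exact (colLT_asymm h1 h2).elim
  have h1 := exists_child_le hb hcol hab
  have h2 := exists_child_le ha hcol.symm hba
  have hmem : ∀ x, x ∈ a.children ↔ x ∈ b.children := by
    intro x
    constructor
    · intro hx
      obtain ⟨t', ht', hle⟩ := h2 x hx
      obtain ⟨t'', ht'', hle2⟩ := h1 t' ht'
      have hcomp : MLE t'' x := mle_trans hle2 hle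
      by_cases hxx : t'' = x
      · subst hxx
        have := mle_antisymm t'' t' (ha.children_umem t'' hx) (hb.children_umem t' ht') hle2 hle
        exact this ▸ ht'
      · exact absurd hcomp (ha.children_incomp t'' ht'' x hx hxx)
    · intro hx
      obtain ⟨t', ht', hle⟩ := h1 x hx
      obtain ⟨t'', ht'', hle2⟩ := h2 t' ht'
      have hcomp : MLE t'' x := mle_trans hle2 hle
      by_cases hxx : t'' = x
      · subst hxx
        have := mle_antisymm t' t'' (ha.children_umem t' ht') (hb.children_umem t'' hx) hle hle2
        exact this ▸ ht'
      · exact absurd hcomp (hb.children_incomp t'' ht'' x hx hxx)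
  obtain ⟨c, ts⟩ := a
  obtain ⟨d, ss⟩ := b
  have hts : ts = ss := chain'_code_eq ha.children_chain hb.children_chain hmem
  rw [show c = d from hcol, hts]
termination_by sizeOf a + sizeOf b
decreasing_by
  · have g1 := sizeOf_child_lt hx
    have g2 := sizeOf_child_lt ht'
    omega
  · have g1 := sizeOf_child_lt ht'
    have g2 := sizeOf_child_lt hx
    omega

end UMemLemmas

section SortFin

variable {n : ℕ}

open CTree

instance : IsTrans (CTree n) (fun a b => CTree.code a ≤ CTree.code b) :=
  ⟨fun _ _ _ h1 h2 => le_trans h1 h2⟩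

instance : IsAntisymm (CTree n) (fun a b => CTree.code a ≤ CTree.code b) :=
  ⟨fun a b h1 h2 => code_inj a b (le_antisymm h1 h2)⟩

instance : IsTotal (CTree n) (fun a b => CTree.code a ≤ CTree.code b) :=
  ⟨fun a b => le_total _ _⟩

open Classical in
/-- the strictly `code`-sorted list of elements of a finite set of trees -/
noncomputable def sortOf (S : Set (CTree n)) : List (CTree n) :=
  if h : S.Finite then h.toFinset.sort (fun a b => CTree.code a ≤ CTree.code b) else []

theorem sortOf_mem {S : Set (CTree n)} (h : S.Finite) {t : CTree n} :
    t ∈ sortOf S ↔ t ∈ S := by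
  classical
  rw [sortOf, dif_pos h, Finset.mem_sort, Set.Finite.mem_toFinset]

theorem sortOf_chain {S : Set (CTree n)} (h : S.Finite) :
    (sortOf S).Chain' (fun a b => CTree.code a < CTree.code b) := by
  classical
  rw [sortOf, dif_pos h]
  show List.IsChain _ _
  rw [List.isChain_iff_pairwise]
  have hs := Finset.pairwise_sort h.toFinset (fun a b => CTree.code a ≤ CTree.code b)
  have hn := Finset.sort_nodup h.toFinset (fun a b => CTree.code a ≤ CTree.code b)
  exact (List.Pairwise.and hs hn).imp
    (fun {a b} hab => lt_of_le_of_ne hab.1 (fun hc => hab.2 (code_inj a b hc)))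

theorem umem_finite : {t : CTree n | UMem t}.Finite := by
  have key : ∀ k : ℕ, {t : CTree n | UMem t ∧ n ≤ colWt t.color + k}.Finite := by
    intro k
    induction k with
    | zero =>
      apply Set.Finite.subset (Set.finite_range (fun c : Col n => CTree.node c []))
      rintro t ⟨ht, hwt⟩
      obtain ⟨c, ts⟩ := t
      cases ts with
      | nil => exact ⟨c, rfl⟩
      | cons t0 ts' =>
        have hm : t0 ∈ (CTree.node c (t0 :: ts')).children := by
          simp [CTree.children]
        have hlt := colLT_wt (ht.colLT_child t0 hm [] t0 (subt_nil t0))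
        have h2 := colWt_le t0.color
        have hco : (CTree.node c (t0 :: ts')).color = c := rfl
        rw [hco] at hwt hlt
        omega
    | succ k ih =>
      apply Set.Finite.of_finite_image
        (f := fun t : CTree n => (t.color, {s | s ∈ t.children}))
      · apply Set.Finite.subset
          (Set.Finite.prod (Set.finite_univ (α := Col n)) (Set.Finite.finite_subsets ih))
        rintro p ⟨t, ⟨ht, hwt⟩, rfl⟩
        refine ⟨trivial, ?_⟩
        rintro s hs
        refine ⟨ht.children_umem s hs, ?_⟩
        have := colLT_wt (ht.colLT_child s hs [] s (subt_nil s))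
        omega
      · rintro t1 ⟨ht1, _⟩ t2 ⟨ht2, _⟩ heq
        have hc : t1.color = t2.color := congrArg Prod.fst heq
        have hch : {s | s ∈ t1.children} = {s | s ∈ t2.children} := congrArg Prod.snd heq
        have hmem : ∀ x, x ∈ t1.children ↔ x ∈ t2.children := fun x => Set.ext_iff.mp hch x
        have hts := chain'_code_eq ht1.children_chain ht2.children_chain hmem
        obtain ⟨c1, ts1⟩ := t1
        obtain ⟨c2, ts2⟩ := t2
        simp only [CTree.color] at hc
        simp only [CTree.children] at hts
        rw [hc, hts]
  apply (key n).subset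
  intro t ht
  exact ⟨ht, by omega⟩

theorem exists_minimal_mle {S : Set (CTree n)} (hfin : S.Finite) (hU : ∀ t ∈ S, UMem t) :
    ∀ t ∈ S, ∃ m, (m ∈ S ∧ ∀ x ∈ S, MLE x m → x = m) ∧ MLE m t := by
  have main : ∀ (N : ℕ) (S : Set (CTree n)), S.Finite → (∀ t ∈ S, UMem t) → S.ncard ≤ N →
      ∀ t ∈ S, ∃ m, (m ∈ S ∧ ∀ x ∈ S, MLE x m → x = m) ∧ MLE m t := by
    intro N
    induction N with
    | zero =>
      intro S hfin hU hc t ht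
      have : 0 < S.ncard := (Set.ncard_pos hfin).mpr ⟨t, ht⟩
      omega
    | succ N ih =>
      intro S hfin hU hc t ht
      by_cases hmin : ∀ x ∈ S, MLE x t → x = t
      · exact ⟨t, ⟨ht, hmin⟩, mle_refl t⟩
      · push_neg at hmin
        obtain ⟨x, hx, hxle, hxne⟩ := hmin
        have hxS' : x ∈ S \ {t} := ⟨hx, by simp [hxne]⟩
        have hcard : (S \ {t}).ncard ≤ N := by
          have := Set.ncard_diff_singleton_lt_of_mem ht hfin
          omega
        obtain ⟨m, ⟨hmS', hmmin⟩, hmle⟩ :=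
          ih (S \ {t}) hfin.diff (fun s hs => hU s hs.1) hcard x hxS'
        refine ⟨m, ⟨hmS'.1, ?_⟩, mle_trans hmle hxle⟩
        intro y hy hyle
        by_cases hyt : y = t
        · subst hyt
          have hmt : MLE m y := mle_trans hmle hxle
          have heq := mle_antisymm y m (hU y hy) (hU m hmS'.1) hyle hmt
          exact absurd hmS'.2 (by rw [← heq]; simp)
        · exact hmmin y ⟨hy, by simp [hyt]⟩ hyle
  intro t ht
  exact main S.ncard S hfin hU le_rfl t ht

end SortFin

section Theta

open CTree

/-- the `n`-color of a point of a model -/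
def colv (M : KStruct) (n : ℕ) (v : M.W) : Col n := fun i => M.V v i.1

/-- candidate subtrees above a point -/
def Dset (M : KStruct) (n : ℕ) (th : M.W → CTree n) (v : M.W) : Set (CTree n) :=
  {t | UMem t ∧ ∃ x, M.R v x ∧ ColLT (colv M n v) (colv M n x) ∧ t = th x}

theorem Dset_finite (M : KStruct) (n : ℕ) (th : M.W → CTree n) (v : M.W) :
    (Dset M n th v).Finite :=
  umem_finite.subset (fun _ ht => ht.1)

/-- minimal elements of a set of trees -/
def minim {n : ℕ} (S : Set (CTree n)) : Set (CTree n) :=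
  {t | t ∈ S ∧ ∀ s ∈ S, MLE s t → s = t}

theorem minim_subset {n : ℕ} (S : Set (CTree n)) : minim S ⊆ S := fun _ ht => ht.1

theorem minim_finite {n : ℕ} {S : Set (CTree n)} (h : S.Finite) : (minim S).Finite :=
  h.subset (minim_subset S)

open Classical in
noncomputable def thetaF (M : KStruct) (n : ℕ) : ℕ → M.W → CTree n
  | 0, v => CTree.node (colv M n v) []
  | (k+1), v =>
    if (Dset M n (thetaF M n k) v).Nonempty then
      CTree.node (colv M n v) (sortOf (minim (Dset M n (thetaF M n k) v)))
    else CTree.node (colv M n v) []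

/-- the canonical tree of a point of a model -/
noncomputable def theta (M : KStruct) (n : ℕ) (v : M.W) : CTree n := thetaF M n n v

theorem thetaF_color (M : KStruct) (n k : ℕ) (v : M.W) :
    (thetaF M n k v).color = colv M n v := by
  cases k with
  | zero => rfl
  | succ k => rw [thetaF]; split <;> rfl

theorem theta_color (M : KStruct) (n : ℕ) (v : M.W) :
    (theta M n v).color = colv M n v := thetaF_color M n n v

theorem Dset_empty_top {M : KStruct} {n : ℕ} {v : M.W} (h : n ≤ colWt (colv M n v))
    (th : M.W → CTree n) : ¬ (Dset M n th v).Nonempty := by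
  rintro ⟨t, _, x, _, hlt, _⟩
  have h1 := colLT_wt hlt
  have h2 := colWt_le (colv M n x)
  omega

theorem thetaF_top {M : KStruct} {n : ℕ} {v : M.W} (h : n ≤ colWt (colv M n v)) (k : ℕ) :
    thetaF M n k v = CTree.node (colv M n v) [] := by
  cases k with
  | zero => rfl
  | succ k => rw [thetaF, if_neg (Dset_empty_top h _)]

theorem thetaF_stable {M : KStruct} {n : ℕ} :
    ∀ (k k' : ℕ) (v : M.W), n - colWt (colv M n v) ≤ k → n - colWt (colv M n v) ≤ k' →
      thetaF M n k v = thetaF M n k' v := by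
  intro k
  induction k with
  | zero =>
    intro k' v h1 _
    have : n ≤ colWt (colv M n v) := by omega
    rw [thetaF_top this, thetaF_top this]
  | succ k ih =>
    intro k' v h1 h2
    by_cases htop : n ≤ colWt (colv M n v)
    · rw [thetaF_top htop, thetaF_top htop]
    · cases k' with
      | zero => omega
      | succ k'' =>
        have hD : Dset M n (thetaF M n k) v = Dset M n (thetaF M n k'') v := by
          ext t
          constructor
          · rintro ⟨hU, x, hR, hlt, rfl⟩
            have hwt := colLT_wt hlt
            exact ⟨hU, x, hR, hlt, ih k'' x (by omega) (by omega)⟩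
          · rintro ⟨hU, x, hR, hlt, rfl⟩
            have hwt := colLT_wt hlt
            exact ⟨hU, x, hR, hlt, (ih k'' x (by omega) (by omega)).symm⟩
        rw [thetaF, thetaF, hD]

open Classical in
theorem theta_eq (M : KStruct) (n : ℕ) (v : M.W) :
    theta M n v =
      if (Dset M n (theta M n) v).Nonempty then
        CTree.node (colv M n v) (sortOf (minim (Dset M n (theta M n) v)))
      else CTree.node (colv M n v) [] := by
  have h := thetaF_stable (M := M) (n := n) n (n+1) v (Nat.sub_le _ _)
    ((Nat.sub_le _ _).trans (Nat.le_succ _))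
  rw [theta, h]
  rfl

theorem subt_single {n : ℕ} {c : Col n} {l : List ℕ} {s : CTree n}
    (h : subt l (CTree.node c []) = some s) : l = [] ∧ s = CTree.node c [] := by
  cases l with
  | nil => rw [subt_nil] at h; exact ⟨rfl, (Option.some.inj h).symm⟩
  | cons i l' => rw [subt_cons_node] at h; simp at h

theorem theta_pcol_le (M : KStruct) (n : ℕ) :
    ∀ (v : M.W) (l : List ℕ) (s : CTree n), subt l (theta M n v) = some s →
      ColLE (colv M n v) s.color := by
  suffices H : ∀ (m : ℕ) (v : M.W), n - colWt (colv M n v) ≤ m →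
      ∀ (l : List ℕ) (s : CTree n), subt l (theta M n v) = some s →
        ColLE (colv M n v) s.color by
    intro v
    exact H (n - colWt (colv M n v)) v le_rfl
  intro m
  induction m with
  | zero =>
    intro v hm l s hsub
    have htop : n ≤ colWt (colv M n v) := by omega
    rw [theta, thetaF_top htop] at hsub
    obtain ⟨rfl, rfl⟩ := subt_single hsub
    exact colLE_refl _
  | succ m ih =>
    intro v hm l s hsub
    rw [theta_eq] at hsub
    split at hsub
    · cases l with
      | nil =>
        rw [subt_nil] at hsub
        rw [← Option.some.inj hsub]
        exact colLE_refl _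
      | cons i l' =>
        rw [subt_cons_node] at hsub
        set L := sortOf (minim (Dset M n (theta M n) v)) with hL
        cases hi : L[i]? with
        | none => rw [hi] at hsub; simp at hsub
        | some ti =>
          rw [hi, Option.bind_some] at hsub
          have hti : ti ∈ minim (Dset M n (theta M n) v) :=
            (sortOf_mem (minim_finite (Dset_finite M n _ v))).mp (mem_of_getElem?' hi)
          obtain ⟨hU, x, hR, hlt, hth⟩ := hti.1
          subst hth
          have hwt := colLT_wt hlt
          exact colLE_trans hlt.1 (ih x (by omega) l' s hsub)
    · obtain ⟨rfl, rfl⟩ := subt_single hsub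
      exact colLE_refl _

theorem theta_umem (M : KStruct) (n : ℕ) (v : M.W) : UMem (theta M n v) := by
  rw [theta_eq]
  split
  · case isTrue h =>
    have hfin := minim_finite (Dset_finite M n (theta M n) v)
    apply UMem.step
    · obtain ⟨t, ht⟩ := h
      obtain ⟨m, hm, _⟩ := exists_minimal_mle (Dset_finite M n _ v) (fun _ ht => ht.1) t ht
      exact List.ne_nil_of_mem ((sortOf_mem hfin).mpr hm)
    · intro t ht
      exact (((sortOf_mem hfin).mp ht).1).1
    · exact sortOf_chain hfin
    · intro t ht s hs hne hMLE
      have hsm := (sortOf_mem hfin).mp hs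
      exact hne (hsm.2 t ((sortOf_mem hfin).mp ht).1 hMLE)
    · intro t ht l s hsub
      obtain ⟨hU, x, hR, hlt, hth⟩ := ((sortOf_mem hfin).mp ht).1
      subst hth
      exact colLT_colLE_trans hlt (theta_pcol_le M n x l s hsub)
  · exact UMem.single _

theorem theta_mono {M : KStruct} (hM : M.IsModel) (n : ℕ) {v x : M.W} (h : M.R v x) :
    MLE (theta M n v) (theta M n x) := by
  have hle : ColLE (colv M n v) (colv M n x) := fun i hi => hM.2.2.2 v x i.1 h hi
  by_cases heq : colv M n v = colv M n x
  · have hsub : Dset M n (theta M n) x ⊆ Dset M n (theta M n) v := by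
      rintro t ⟨hU, y, hR, hlt, rfl⟩
      exact ⟨hU, y, hM.2.1 v x y h hR, heq ▸ hlt, rfl⟩
    rw [theta_eq M n v, theta_eq M n x]
    by_cases hx : (Dset M n (theta M n) x).Nonempty
    · have hv : (Dset M n (theta M n) v).Nonempty := hx.mono hsub
      rw [if_pos hx, if_pos hv, ← heq]
      apply mle_node_node
      intro t' ht'
      have ht'D : t' ∈ Dset M n (theta M n) v :=
        hsub (minim_subset _ ((sortOf_mem (minim_finite (Dset_finite M n _ x))).mp ht'))
      obtain ⟨m, hm, hmle⟩ := exists_minimal_mle (Dset_finite M n _ v) (fun _ ht => ht.1) t' ht'D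
      exact ⟨m, (sortOf_mem (minim_finite (Dset_finite M n _ v))).mpr hm, hmle⟩
    · rw [if_neg hx]
      apply mle_single
      rw [← heq]
      split <;> rfl
  · have hlt : ColLT (colv M n v) (colv M n x) := ⟨hle, heq⟩
    have hmem : theta M n x ∈ Dset M n (theta M n) v := ⟨theta_umem M n x, x, h, hlt, rfl⟩
    obtain ⟨m, hm, hmle⟩ := exists_minimal_mle (Dset_finite M n _ v) (fun _ ht => ht.1) _ hmem
    have hv : (Dset M n (theta M n) v).Nonempty := ⟨_, hmem⟩
    rw [theta_eq M n v, if_pos hv]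
    have hmm : m ∈ sortOf (minim (Dset M n (theta M n) v)) :=
      (sortOf_mem (minim_finite (Dset_finite M n _ v))).mpr hm
    obtain ⟨j, hj, hgj⟩ := List.getElem_of_mem hmm
    have hsub : subt [j] (CTree.node (colv M n v) (sortOf (minim (Dset M n (theta M n) v))))
        = some m := by
      rw [subt_cons_node, List.getElem?_eq_getElem hj, hgj, Option.bind_some, subt_nil]
    exact mle_trans (mle_subtree hsub) hmle

theorem theta_subt {M : KStruct} (hM : M.IsModel) (n : ℕ) :
    ∀ (v : M.W) (l : List ℕ) (s : CTree n), subt l (theta M n v) = some s →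
      ∃ x, M.R v x ∧ theta M n x = s := by
  suffices H : ∀ (m : ℕ) (v : M.W), n - colWt (colv M n v) ≤ m →
      ∀ (l : List ℕ) (s : CTree n), subt l (theta M n v) = some s →
        ∃ x, M.R v x ∧ theta M n x = s by
    intro v
    exact H (n - colWt (colv M n v)) v le_rfl
  intro m
  induction m with
  | zero =>
    intro v hm l s hsub
    have htop : n ≤ colWt (colv M n v) := by omega
    rw [theta, thetaF_top htop] at hsub
    obtain ⟨rfl, rfl⟩ := subt_single hsub
    exact ⟨v, hM.1 v, by rw [theta, thetaF_top htop]⟩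
  | succ m ih =>
    intro v hm l s hsub
    rw [theta_eq] at hsub
    split at hsub
    · case isTrue hpos =>
      cases l with
      | nil =>
        rw [subt_nil] at hsub
        refine ⟨v, hM.1 v, ?_⟩
        rw [theta_eq, if_pos hpos]
        exact Option.some.inj hsub
      | cons i l' =>
        rw [subt_cons_node] at hsub
        cases hi : (sortOf (minim (Dset M n (theta M n) v)))[i]? with
        | none => rw [hi] at hsub; simp at hsub
        | some ti =>
          rw [hi, Option.bind_some] at hsub
          have hti : ti ∈ minim (Dset M n (theta M n) v) :=
            (sortOf_mem (minim_finite (Dset_finite M n _ v))).mp (mem_of_getElem?' hi)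
          obtain ⟨hU, y, hR, hlt, hth⟩ := hti.1
          subst hth
          have hwt := colLT_wt hlt
          obtain ⟨x, hRx, hthx⟩ := ih y (by omega) l' s hsub
          exact ⟨x, hM.2.1 v y x hR hRx, hthx⟩
    · case isFalse hneg =>
      obtain ⟨rfl, rfl⟩ := subt_single hsub
      refine ⟨v, hM.1 v, ?_⟩
      rw [theta_eq, if_neg hneg]

theorem theta_forth {M : KStruct} (hM : M.IsModel) (n : ℕ) {v : M.W} {s' : CTree n}
    (h : MLE (theta M n v) s') :
    ∃ v', M.R v v' ∧ colv M n v' = s'.color ∧ MLE (theta M n v') s' := by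
  obtain ⟨q, as, hq, hcol, hmle⟩ := mle_factor h (subt_nil s')
  obtain ⟨v', hR, hth⟩ := theta_subt hM n v q as hq
  refine ⟨v', hR, ?_, hth ▸ hmle⟩
  rw [← theta_color M n v', hth, hcol]

end Theta

section Assemble

open CTree

theorem univModel_isModel (n : ℕ) : (UnivModel n).IsModel := by
  refine ⟨?_, ?_, ?_, ?_⟩
  · intro t; exact mle_refl t.1
  · intro a b c h1 h2; exact mle_trans h1 h2
  · intro a b h1 h2; exact Subtype.ext (mle_antisymm a.1 b.1 a.2 b.2 h1 h2)
  · intro a b p h hV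
    by_cases hp : p < n
    · show (if h : p < n then b.1.color ⟨p, h⟩ else false) = true
      rw [dif_pos hp]
      have hV' : a.1.color ⟨p, hp⟩ = true := by
        have h2 : (if h : p < n then a.1.color ⟨p, h⟩ else false) = true := hV
        rwa [dif_pos hp] at h2
      exact mle_color_le a.2 h ⟨p, hp⟩ hV'
    · have h2 : (if h : p < n then a.1.color ⟨p, h⟩ else false) = true := hV
      rw [dif_neg hp] at h2
      exact absurd h2 (by simp)

theorem pmorphism_sat {N M : KStruct} {f : N.W → M.W} (h : PMorphism N M f) :
    ∀ (χ : Formula) (x : N.W), N.sat x χ ↔ M.sat (f x) χ := by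
  intro χ
  induction χ with
  | bot => intro x; exact Iff.rfl
  | var p =>
    intro x
    show N.V x p = true ↔ M.V (f x) p = true
    rw [h.1.2 x p]
  | and φ ψ ihφ ihψ => intro x; exact and_congr (ihφ x) (ihψ x)
  | or φ ψ ihφ ihψ => intro x; exact or_congr (ihφ x) (ihψ x)
  | imp φ ψ ihφ ihψ =>
    intro x
    constructor
    · intro hx u' hu' hφ'
      obtain ⟨u, hRu, rfl⟩ := h.2 x u' hu'
      exact (ihψ u).mp (hx u hRu ((ihφ u).mpr hφ'))
    · intro hx u hRu hφ'
      exact (ihψ u).mpr (hx (f u) (h.1.1 x u hRu) ((ihφ u).mp hφ'))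

theorem sat_truncate (M : KStruct) (n : ℕ) :
    ∀ (χ : Formula), χ.varsBelow n → ∀ v,
      (KStruct.mk M.W M.R (fun v p => if p < n then M.V v p else false)).sat v χ ↔
        M.sat v χ := by
  intro χ
  induction χ with
  | bot => intro _ _; exact Iff.rfl
  | var p =>
    intro hχ v
    show (if p < n then M.V v p else false) = true ↔ M.V v p = true
    have hp : p < n := hχ
    rw [if_pos hp]
  | and φ ψ ihφ ihψ => intro hχ v; exact and_congr (ihφ hχ.1 v) (ihψ hχ.2 v)
  | or φ ψ ihφ ihψ => intro hχ v; exact or_congr (ihφ hχ.1 v) (ihψ hχ.2 v)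
  | imp φ ψ ihφ ihψ =>
    intro hχ v
    constructor
    · intro h u hR hφ'; exact (ihψ hχ.2 u).mp (h u hR ((ihφ hχ.1 u).mpr hφ'))
    · intro h u hR hφ'; exact (ihψ hχ.2 u).mpr (h u hR ((ihφ hχ.1 u).mp hφ'))

end Assemble

/-- if an MR-formula `φ` in `n` variables is satisfiable together with
the failure of an MR-formula `ψ` in `n` variables at a point of some Kripke model,
then this is witnessed at some node of the universal model `𝒯(n)`. -/

theorem univ_model_provides_counterexamples (n : ℕ) (φ ψ : Formula)
    (hφ : MR φ) (hψ : MR ψ) (hvφ : φ.varsBelow n) (hvψ : ψ.varsBelow n)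
    (M : KStruct) (hM : M.IsModel) (w : M.W)
    (h1 : M.sat w φ) (h2 : ¬ M.sat w ψ) :
    ∃ u : (UnivModel n).W, (UnivModel n).sat u φ ∧ ¬ (UnivModel n).sat u ψ := by
  classical
  set M1 : KStruct := ⟨M.W, M.R, fun v p => if p < n then M.V v p else false⟩ with hM1def
  have hM1 : M1.IsModel := by
    refine ⟨hM.1, hM.2.1, hM.2.2.1, ?_⟩
    intro a b p hR hV
    show (if p < n then M.V b p else false) = true
    have hV' : (if p < n then M.V a p else false) = true := hV
    by_cases hp : p < n
    · rw [if_pos hp] at hV' ⊢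
      exact hM.2.2.2 a b p hR hV'
    · rw [if_neg hp] at hV'
      exact absurd hV' (by simp)
  have hsat1 : M1.sat w φ := (sat_truncate M n φ hvφ w).mpr h1
  have hsat2 : ¬ M1.sat w ψ := fun hc => h2 ((sat_truncate M n ψ hvψ w).mp hc)
  have hUM := univModel_isModel n
  refine ⟨⟨theta M1 n w, theta_umem M1 n w⟩, ?_, ?_⟩
  · -- φ holds at the universal node, via the pullback model
    set N : KStruct := ⟨{x : M.W × CTree n // UMem x.2 ∧ MLE (theta M1 n x.1) x.2 ∧
        ∀ p, M1.V x.1 p = (if h : p < n then x.2.color ⟨p, h⟩ else false)},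
      fun a b => M.R a.1.1 b.1.1 ∧ MLE a.1.2 b.1.2,
      fun a p => M1.V a.1.1 p⟩ with hNdef
    have hNmod : N.IsModel := by
      refine ⟨?_, ?_, ?_, ?_⟩
      · intro a; exact ⟨hM.1 _, mle_refl _⟩
      · intro a b c ha hb; exact ⟨hM.2.1 _ _ _ ha.1 hb.1, mle_trans ha.2 hb.2⟩
      · intro a b ha hb
        apply Subtype.ext
        exact Prod.ext (hM.2.2.1 _ _ ha.1 hb.1)
          (mle_antisymm _ _ a.2.1 b.2.1 ha.2 hb.2)
      · intro a b p h hV; exact hM1.2.2.2 _ _ p h.1 hV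
    have hx₀cond : UMem (theta M1 n w) ∧ MLE (theta M1 n w) (theta M1 n w) ∧
        ∀ p, M1.V w p = (if h : p < n then (theta M1 n w).color ⟨p, h⟩ else false) := by
      refine ⟨theta_umem M1 n w, mle_refl _, ?_⟩
      intro p
      by_cases hp : p < n
      · rw [dif_pos hp, theta_color]
        rfl
      · rw [dif_neg hp]
        show (if p < n then M.V w p else false) = false
        rw [if_neg hp]
    set x₀ : N.W := ⟨(w, theta M1 n w), hx₀cond⟩ with hx₀def
    have hπ₁ : Monotonic N M1 (fun a => a.1.1) := ⟨fun a b h => h.1, fun a p => rfl⟩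
    have hφx₀ : N.sat x₀ φ := hφ N M1 hNmod hM1 _ hπ₁ x₀ hsat1
    have hπ₂ : PMorphism N (UnivModel n) (fun a => ⟨a.1.2, a.2.1⟩) := by
      refine ⟨⟨fun a b h => h.2, ?_⟩, ?_⟩
      · intro a p
        show (if h : p < n then a.1.2.color ⟨p, h⟩ else false) = M1.V a.1.1 p
        exact (a.2.2.2 p).symm
      · intro a u' hRu'
        have hth : MLE (theta M1 n a.1.1) u'.1 := mle_trans a.2.2.1 hRu'
        obtain ⟨v', hRv', hcolv', hmlev'⟩ := theta_forth hM1 n hth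
        have hcond : UMem u'.1 ∧ MLE (theta M1 n v') u'.1 ∧
            ∀ p, M1.V v' p = (if h : p < n then u'.1.color ⟨p, h⟩ else false) := by
          refine ⟨u'.2, hmlev', ?_⟩
          intro p
          by_cases hp : p < n
          · rw [dif_pos hp]
            have := congrFun hcolv' ⟨p, hp⟩
            exact this
          · rw [dif_neg hp]
            show (if p < n then M.V v' p else false) = false
            rw [if_neg hp]
        refine ⟨⟨(v', u'.1), hcond⟩, ⟨hRv', hRu'⟩, ?_⟩
        exact Subtype.ext rfl
    exact (pmorphism_sat hπ₂ φ x₀).mp hφx₀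
  · -- ψ fails at the universal node
    intro hc
    have hθ : Monotonic M1 (UnivModel n) (fun v => ⟨theta M1 n v, theta_umem M1 n v⟩) := by
      refine ⟨fun a b h => theta_mono hM1 n h, ?_⟩
      intro v p
      show (if h : p < n then (theta M1 n v).color ⟨p, h⟩ else false) = M1.V v p
      by_cases hp : p < n
      · rw [dif_pos hp, theta_color]
        rfl
      · rw [dif_neg hp]
        show false = (if p < n then M.V v p else false)
        rw [if_neg hp]
    exact hsat2 (hψ M1 (UnivModel n) hM1 hUM _ hθ w hc)
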